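/- Let A be a {0,1}-matrix that is linear (no 2×2 all-ones submatrix). Then A is balanced if and only if the row submatrix A↑ consisting of the maximal (non-dominated) rows of A is balanced. -/

import Mathlib

/-- A matrix contains an odd cycle submatrix: a square submatrix of odd order
with exactly two 1's per row and per column. A `{0,1}`-matrix is balanced iff it
contains no such submatrix. -/
def ContainsOddCycleSubmatrix {ρ γ : Type*} (A : Matrix ρ γ ℕ) : Prop :=
  ∃ (h : ℕ) (r : Fin h → ρ) (c : Fin h → γ), Odd h ∧
    Function.Injective r ∧ Function.Injective c ∧
    (∀ i, (Finset.univ.filter fun j => A (r i) (c j) = 1).card = 2) ∧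
    (∀ j, (Finset.univ.filter fun i => A (r i) (c j) = 1).card = 2)

/-- A row is maximal (non-dominated) if every row dominating it is equal to it. -/
def IsMaximalRow {ρ γ : Type*} (A : Matrix ρ γ ℕ) (r : ρ) : Prop :=
  ∀ r' : ρ, (∀ j, A r j ≤ A r' j) → (∀ j, A r' j ≤ A r j)

/-- A linear `{0,1}`-matrix `A` (no 2×2 all-ones submatrix) is
balanced if and only if its up-matrix `A↑` (the row submatrix of non-dominated
rows) is balanced. -/
theorem stmt7 {ρ γ : Type*} (A : Matrix ρ γ ℕ)
    (h01 : ∀ i j, A i j = 0 ∨ A i j = 1)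
    (hlin : ¬ ∃ (r₁ r₂ : ρ) (c₁ c₂ : γ), r₁ ≠ r₂ ∧ c₁ ≠ c₂ ∧
      A r₁ c₁ = 1 ∧ A r₁ c₂ = 1 ∧ A r₂ c₁ = 1 ∧ A r₂ c₂ = 1) :
    (¬ ContainsOddCycleSubmatrix A) ↔
      ¬ ContainsOddCycleSubmatrix
        (A.submatrix (Subtype.val : {r : ρ // IsMaximalRow A r} → ρ) id) := by
  rw [not_iff_not]
  constructor
  · rintro ⟨h, r, c, hodd, hrinj, hcinj, hrow, hcol⟩
    -- every row appearing in the cycle is maximal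
    have hmax : ∀ i, IsMaximalRow A (r i) := by
      intro i r' hle j
      rcases h01 r' j with h0 | h1
      · rw [h0]; exact Nat.zero_le _
      rcases h01 (r i) j with h0' | h1'
      · -- row r i has two ones, dominated strictly : contradiction with linearity
        exfalso
        have hcard := hrow i
        rw [Finset.card_eq_two] at hcard
        obtain ⟨j₁, j₂, hne, hset⟩ := hcard
        have hm1 : j₁ ∈ Finset.univ.filter fun j => A (r i) (c j) = 1 := by
          rw [hset]; simp
        have hm2 : j₂ ∈ Finset.univ.filter fun j => A (r i) (c j) = 1 := by
          rw [hset]; simp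
        simp only [Finset.mem_filter] at hm1 hm2
        have hrne : r i ≠ r' := by
          intro hEq
          rw [← hEq] at h1
          rw [h0'] at h1
          exact absurd h1 (by norm_num)
        have one1 : A r' (c j₁) = 1 := by
          rcases h01 r' (c j₁) with h | h
          · have := hle (c j₁); rw [hm1.2, h] at this; omega
          · exact h
        have one2 : A r' (c j₂) = 1 := by
          rcases h01 r' (c j₂) with h | h
          · have := hle (c j₂); rw [hm2.2, h] at this; omega
          · exact h
        exact hlin ⟨r i, r', c j₁, c j₂, hrne, fun hc => hne (hcinj hc),
          hm1.2, hm2.2, one1, one2⟩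
      · rw [h1, h1']
    refine ⟨h, fun i => ⟨r i, hmax i⟩, c, hodd, ?_, hcinj, ?_, ?_⟩
    · intro a b hab
      exact hrinj (congrArg Subtype.val hab)
    · intro i; exact hrow i
    · intro j; exact hcol j
  · rintro ⟨h, r, c, hodd, hrinj, hcinj, hrow, hcol⟩
    refine ⟨h, fun i => (r i).val, c, hodd, ?_, hcinj, ?_, ?_⟩
    · exact Subtype.val_injective.comp hrinj
    · intro i; exact hrow i
    · intro j; exact hcol j
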